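/- Let $n = \binom{d+k}{d} - 1$ for positive integers $d, k$. Then the minimal sum of degrees of $n$ distinct nonconstant monomials in $d$ variables equals $Q = \frac{kd}{d+1}\binom{d+k}{d}$, achieved by taking all nonconstant monomials of degree at most $k$. -/

import Mathlib

open Finset

/-- Finset of tuples with sum ≤ j. -/
def Bset (d j : ℕ) : Finset (Fin d → ℕ) :=
  (Fintype.piFinset fun _ => Finset.range (j+1)).filter (fun α => ∑ l, α l ≤ j)

lemma mem_Bset {d j : ℕ} {α : Fin d → ℕ} : α ∈ Bset d j ↔ ∑ l, α l ≤ j := by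
  simp only [Bset, Finset.mem_filter, Fintype.mem_piFinset, Finset.mem_range]
  constructor
  · exact fun h => h.2
  · intro h
    refine ⟨fun l => ?_, h⟩
    have : α l ≤ ∑ l, α l := Finset.single_le_sum (fun i _ => Nat.zero_le _) (Finset.mem_univ l)
    omega

/-- equivalence between tuples and multisets -/
noncomputable def tupEquiv (d : ℕ) : (Fin d → ℕ) ≃ Multiset (Fin d) :=
  (Finsupp.equivFunOnFinite.symm).trans Multiset.toFinsupp.toEquiv.symm

lemma card_tupEquiv (d : ℕ) (α : Fin d → ℕ) :
    Multiset.card (tupEquiv d α) = ∑ l, α l := by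
  have : tupEquiv d α = Finsupp.toMultiset (Finsupp.equivFunOnFinite.symm α) := rfl
  rw [this, Finsupp.card_toMultiset, Finsupp.sum_fintype _ _ (fun _ => rfl)]
  simp [Finsupp.equivFunOnFinite]
  rfl

noncomputable def sumEqEquiv (d i : ℕ) : {α : Fin d → ℕ // ∑ l, α l = i} ≃ Sym (Fin d) i :=
  (tupEquiv d).subtypeEquiv (fun α => by rw [← card_tupEquiv])

noncomputable instance (d i : ℕ) : Fintype {α : Fin d → ℕ // ∑ l, α l = i} :=
  Fintype.ofEquiv _ (sumEqEquiv d i).symm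

lemma card_sumEq (d i : ℕ) : Fintype.card {α : Fin d → ℕ // ∑ l, α l = i} = Nat.multichoose d i := by
  rw [Fintype.card_congr (sumEqEquiv d i), Sym.card_sym_eq_multichoose]
  simp

def Dset (d i : ℕ) : Finset (Fin d → ℕ) :=
  (Fintype.piFinset fun _ => Finset.range (i+1)).filter (fun α => ∑ l, α l = i)

lemma mem_Dset {d i : ℕ} {α : Fin d → ℕ} : α ∈ Dset d i ↔ ∑ l, α l = i := by
  simp only [Dset, Finset.mem_filter, Fintype.mem_piFinset, Finset.mem_range]
  constructor
  · exact fun h => h.2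
  · intro h
    refine ⟨fun l => ?_, h⟩
    have : α l ≤ ∑ l, α l := Finset.single_le_sum (fun i _ => Nat.zero_le _) (Finset.mem_univ l)
    omega

lemma card_Dset (d i : ℕ) : (Dset d i).card = Nat.multichoose d i := by
  rw [← card_sumEq]
  exact (Fintype.card_of_subtype _ (fun α => mem_Dset)).symm

lemma hockey (e j : ℕ) : ∑ i ∈ range (j+1), (e+i).choose i = (e+1+j).choose j := by
  induction j with
  | zero => simp
  | succ j ih =>
    rw [Finset.sum_range_succ, ih]
    have := Nat.choose_succ_succ' (e+j+1) j
    have h1 : e + 1 + j = e + j + 1 := by ring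
    have h2 : e + 1 + (j+1) = e + j + 1 + 1 := by ring
    rw [h1, h2, Nat.choose_succ_succ']
    ring_nf

lemma card_Bset (d j : ℕ) (hd : 0 < d) : (Bset d j).card = (d + j).choose d := by
  have : Bset d j = (range (j+1)).biUnion (fun i => Dset d i) := by
    ext α
    simp only [mem_Bset, Finset.mem_biUnion, Finset.mem_range, mem_Dset]
    constructor
    · exact fun h => ⟨∑ l, α l, by omega, rfl⟩
    · rintro ⟨i, hi, rfl⟩; omega
  rw [this, Finset.card_biUnion]
  · have : ∀ i ∈ range (j+1), (Dset d i).card = (d - 1 + i).choose i := by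
      intro i _
      rw [card_Dset, Nat.multichoose_eq]
      congr 1
      omega
    rw [Finset.sum_congr rfl this, hockey]
    have h : d - 1 + 1 + j = d + j := by omega
    rw [h]
    have := Nat.choose_symm (show d ≤ d + j from Nat.le_add_right d j)
    rw [← this]
    congr 1
    omega
  · intro x hx y hy hxy
    simp only [Finset.disjoint_left, mem_Dset]
    intro a ha hb
    exact hxy (ha ▸ hb ▸ rfl)

lemma min_eq_sum_ite (m k : ℕ) : ∑ j ∈ range k, (if j < m then 1 else 0) = min m k := by
  induction k with
  | zero => simp
  | succ k ih =>
    rw [Finset.sum_range_succ, ih]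
    split <;> omega

lemma sum_min_eq (d k : ℕ) (T : Finset (Fin d → ℕ)) :
    ∑ α ∈ T, min (∑ l, α l) k
      = ∑ j ∈ range k, (T.card - (T.filter (fun α => ∑ l, α l ≤ j)).card) := by
  calc ∑ α ∈ T, min (∑ l, α l) k
      = ∑ α ∈ T, ∑ j ∈ range k, (if j < ∑ l, α l then 1 else 0) := by
        exact Finset.sum_congr rfl fun α _ => (min_eq_sum_ite _ _).symm
    _ = ∑ j ∈ range k, ∑ α ∈ T, (if j < ∑ l, α l then 1 else 0) := Finset.sum_comm
    _ = ∑ j ∈ range k, (T.filter (fun α => j < ∑ l, α l)).card := by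
        exact Finset.sum_congr rfl fun j _ => (Finset.card_filter _ _).symm
    _ = ∑ j ∈ range k, (T.card - (T.filter (fun α => ∑ l, α l ≤ j)).card) := by
        refine Finset.sum_congr rfl fun j _ => ?_
        have he : T.filter (fun α => j < ∑ l, α l)
            = T \ T.filter (fun α => ∑ l, α l ≤ j) := by
          rw [← Finset.filter_not]
          refine Finset.filter_congr ?_
          intro α _
          simp
        rw [he, Finset.card_sdiff_of_subset (Finset.filter_subset _ _)]

theorem stmt15 (d k n : ℕ) (hd : 0 < d) (hk : 0 < k) (hn : n = (d + k).choose d - 1) :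
    ∃ Q : ℕ,
      IsLeast
        {s : ℕ | ∃ T : Finset (Fin d → ℕ), T.card = n ∧ (∀ α ∈ T, α ≠ 0) ∧
          s = ∑ α ∈ T, ∑ l, α l} Q ∧
      (d + 1) * Q = k * d * (d + k).choose d ∧
      ∃ T : Finset (Fin d → ℕ),
        (∀ α : Fin d → ℕ, α ∈ T ↔ (α ≠ 0 ∧ ∑ l, α l ≤ k)) ∧
        T.card = n ∧ (∑ α ∈ T, ∑ l, α l) = Q := by
  classical
  set A := (d + k).choose d with hA
  have hApos : 1 ≤ A := Nat.choose_pos (Nat.le_add_right d k)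
  -- the canonical witness
  set T0 : Finset (Fin d → ℕ) := (Bset d k).erase 0 with hT0
  have hzero : ∀ j : ℕ, (0 : Fin d → ℕ) ∈ Bset d j := by
    intro j; rw [mem_Bset]; simp
  have hmemT0 : ∀ α : Fin d → ℕ, α ∈ T0 ↔ (α ≠ 0 ∧ ∑ l, α l ≤ k) := by
    intro α; rw [hT0, Finset.mem_erase, mem_Bset]
  have hcardT0 : T0.card = n := by
    rw [hT0, Finset.card_erase_of_mem (hzero k), card_Bset d k hd, hn]
  -- the value Q
  set Q : ℕ := ∑ j ∈ range k, (n - ((d + j).choose d - 1)) with hQ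
  -- filter cardinality bound for any admissible T
  have hfilter_le : ∀ (T : Finset (Fin d → ℕ)), (∀ α ∈ T, α ≠ 0) → ∀ j : ℕ,
      (T.filter (fun α => ∑ l, α l ≤ j)).card ≤ (d + j).choose d - 1 := by
    intro T h0 j
    have hsub : T.filter (fun α => ∑ l, α l ≤ j) ⊆ (Bset d j).erase 0 := by
      intro α hα
      rw [Finset.mem_filter] at hα
      rw [Finset.mem_erase, mem_Bset]
      exact ⟨h0 α hα.1, hα.2⟩
    calc (T.filter (fun α => ∑ l, α l ≤ j)).card ≤ ((Bset d j).erase 0).card :=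
          Finset.card_le_card hsub
      _ = (d + j).choose d - 1 := by
          rw [Finset.card_erase_of_mem (hzero j), card_Bset d j hd]
  -- lower bound for any admissible T
  have hlb : ∀ (T : Finset (Fin d → ℕ)), T.card = n → (∀ α ∈ T, α ≠ 0) →
      Q ≤ ∑ α ∈ T, ∑ l, α l := by
    intro T hc h0
    calc Q ≤ ∑ j ∈ range k, (T.card - (T.filter (fun α => ∑ l, α l ≤ j)).card) := by
          refine Finset.sum_le_sum fun j _ => ?_
          rw [hc]
          exact Nat.sub_le_sub_left (hfilter_le T h0 j) n
      _ = ∑ α ∈ T, min (∑ l, α l) k := (sum_min_eq d k T).symm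
      _ ≤ ∑ α ∈ T, ∑ l, α l := Finset.sum_le_sum fun α _ => Nat.min_le_left _ _
  -- value at the canonical witness
  have hsumT0 : (∑ α ∈ T0, ∑ l, α l) = Q := by
    have hmin : ∀ α ∈ T0, min (∑ l, α l) k = ∑ l, α l := by
      intro α hα
      exact Nat.min_eq_left ((hmemT0 α).1 hα).2
    calc (∑ α ∈ T0, ∑ l, α l) = ∑ α ∈ T0, min (∑ l, α l) k :=
          (Finset.sum_congr rfl hmin).symm
      _ = ∑ j ∈ range k, (T0.card - (T0.filter (fun α => ∑ l, α l ≤ j)).card) :=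
          sum_min_eq d k T0
      _ = Q := by
          refine Finset.sum_congr rfl fun j hj => ?_
          rw [Finset.mem_range] at hj
          have he : T0.filter (fun α => ∑ l, α l ≤ j) = (Bset d j).erase 0 := by
            ext α
            rw [Finset.mem_filter, hmemT0 α, Finset.mem_erase, mem_Bset]
            constructor
            · rintro ⟨⟨h1, _⟩, h3⟩; exact ⟨h1, h3⟩
            · rintro ⟨h1, h2⟩; exact ⟨⟨h1, le_trans h2 (by omega)⟩, h2⟩
          rw [he, Finset.card_erase_of_mem (hzero j), card_Bset d j hd, hcardT0]
  -- arithmetic identity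
  have harith : (d + 1) * Q = k * d * A := by
    clear hsumT0 hlb hfilter_le hmemT0
    have hQeq : Q = ∑ j ∈ range k, (A - (d + j).choose d) := by
      refine Finset.sum_congr rfl fun j hj => ?_
      rw [Finset.mem_range] at hj
      have h1 : (d + j).choose d ≤ A := Nat.choose_le_choose d (by omega)
      have h2 : 1 ≤ (d + j).choose d := Nat.choose_pos (Nat.le_add_right d j)
      omega
    set B : ℕ := (d + k).choose (d + 1) with hB
    have hsumchoose : ∑ j ∈ range k, (d + j).choose d = B := by
      have hsymm : ∀ j ∈ range k, (d + j).choose d = (d + j).choose j := by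
        intro j _
        have := Nat.choose_symm (show d ≤ d + j from Nat.le_add_right d j)
        rw [← this]; congr 1; omega
      rw [Finset.sum_congr rfl hsymm]
      have hk1 : k = (k - 1) + 1 := by omega
      rw [hk1, hockey d (k - 1), hB]
      have := Nat.choose_symm (show d + 1 ≤ d + k from by omega)
      rw [← this]
      congr 1 <;> omega
    have h1 : Q + B = k * A := by
      rw [hQeq, ← hsumchoose, ← Finset.sum_add_distrib]
      have : ∀ j ∈ range k, (A - (d + j).choose d) + (d + j).choose d = A := by
        intro j hj
        rw [Finset.mem_range] at hj
        exact Nat.sub_add_cancel (Nat.choose_le_choose d (by omega))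
      rw [Finset.sum_congr rfl this, Finset.sum_const, Finset.card_range, smul_eq_mul]
    have h2 : B * (d + 1) = A * k := by
      have := Nat.choose_succ_right_eq (d + k) d
      rw [← hB, ← hA] at this
      rw [this]
      congr 1
      omega
    have h3 : (d + 1) * Q + A * k = (d + 1) * (k * A) := by
      rw [← h1, Nat.mul_add, Nat.mul_comm (d + 1) B, h2]
    have h4 : (d + 1) * (k * A) = k * d * A + A * k := by ring
    omega
  exact ⟨Q, ⟨⟨T0, hcardT0, fun α hα => ((hmemT0 α).1 hα).1, hsumT0.symm⟩,
    fun s hs => by obtain ⟨T, hc, h0, rfl⟩ := hs; exact hlb T hc h0⟩,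
    harith, T0, hmemT0, hcardT0, hsumT0⟩
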